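/- Let X be a real m×p matrix with m ≥ p such that XᵀX is invertible, with d_min > 0 the smallest eigenvalue of (1/m)XᵀX, let σ² > 0, ε > 0 and 0 < M < ∞, and suppose m > 32(log 2)σ²p/(ε²·d_min). Then there exist constants C > 0 and N ≥ 1, depending only on ε, m, p, σ², d_min and M, with the following property: for every n ≥ N, every set of points s₁,…,s_n, and every pair of maps β⁰, β¹ : {s₁,…,s_n} → ℝ^p whose coordinate values are all bounded in absolute value by M and which satisfy max_{1≤k≤p} (1/n)·Σ_{i=1}^n |β¹_k(s_i) − β⁰_k(s_i)| ≥ ε, there exists a measurable test Φ : (ℝ^m)^n → {0,1} such that E_{P₀}[Φ] ≤ exp(−C·n) and E_{P₁}[1 − Φ] ≤ exp(−C·n), where for t ∈ {0,1}, P_t is the product measure under which y₁,…,y_n are independent with y_i ∼ N(Xβ^t(s_i), σ²I_m). -/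

import Mathlib

open MeasureTheory Matrix

/-- The Lebesgue density of the Gaussian measure `N(μ, σ²I_m)` on `ℝ^m`. -/
noncomputable def gaussDensity (m : ℕ) (μ : Fin m → ℝ) (σ2 : ℝ) (y : Fin m → ℝ) : ℝ :=
  (2 * Real.pi * σ2) ^ (-(m : ℝ) / 2) * Real.exp (-(∑ i, (y i - μ i) ^ 2) / (2 * σ2))

/-- The Gaussian probability measure `N(μ, σ²I_m)` on `ℝ^m`, given by its density
with respect to Lebesgue measure. -/
noncomputable def gaussMeasure (m : ℕ) (μ : Fin m → ℝ) (σ2 : ℝ) : Measure (Fin m → ℝ) :=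
  volume.withDensity fun y => ENNReal.ofReal (gaussDensity m μ σ2 y)

theorem lintegral_fin_prod_eq_prod {n : ℕ} {E : Fin n → Type*}
    [∀ i, MeasurableSpace (E i)] (μ : ∀ i, Measure (E i)) [∀ i, SigmaFinite (μ i)]
    (f : (i : Fin n) → E i → ENNReal) (hf : ∀ i, Measurable (f i)) :
    ∫⁻ x : (i : Fin n) → E i, ∏ i, f i (x i) ∂Measure.pi μ = ∏ i, ∫⁻ x, f i x ∂μ i := by
  induction n with
  | zero => simp [Measure.pi_of_empty]
  | succ n n_ih =>
      calc
        _ = ∫⁻ x : E 0 × ((i : Fin n) → E (Fin.succ i)),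
            f 0 x.1 * ∏ i : Fin n, f (Fin.succ i) (x.2 i)
            ∂((μ 0).prod (Measure.pi fun i => μ (Fin.succ i))) := by
          rw [← ((measurePreserving_piFinSuccAbove μ 0).symm).lintegral_comp_emb
            (MeasurableEquiv.measurableEmbedding _)]
          congr 1
          ext x
          simp_rw [MeasurableEquiv.piFinSuccAbove_symm_apply, Fin.insertNthEquiv,
            Fin.prod_univ_succ, Fin.insertNth_zero, Equiv.coe_fn_mk, Fin.cons_succ,
            Fin.cons_zero]
          rfl
        _ = (∫⁻ x, f 0 x ∂μ 0) * ∏ i : Fin n, ∫⁻ x, f (Fin.succ i) x ∂μ (Fin.succ i) := by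
          rw [lintegral_prod_mul (f := f 0) (g := fun v : (i : Fin n) → E (Fin.succ i) => ∏ i, f i.succ (v i)) (hf 0).aemeasurable ((Finset.measurable_prod _ fun i _ =>
            (hf _).comp (measurable_pi_apply i)).aemeasurable),
            n_ih _ _ (fun i => hf _)]
        _ = ∏ i, ∫⁻ x, f i x ∂μ i := by rw [Fin.prod_univ_succ]

theorem pi_withDensity_eq {n : ℕ} {E : Fin n → Type*}
    [∀ i, MeasurableSpace (E i)] (μ : ∀ i, Measure (E i)) [∀ i, SigmaFinite (μ i)]
    (f : (i : Fin n) → E i → ENNReal) (hf : ∀ i, Measurable (f i))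
    [∀ i, SigmaFinite ((μ i).withDensity (f i))] :
    Measure.pi (fun i => (μ i).withDensity (f i))
      = (Measure.pi μ).withDensity (fun x => ∏ i, f i (x i)) := by
  refine Measure.pi_eq fun s hs => ?_
  rw [withDensity_apply _ (MeasurableSet.univ_pi hs)]
  have key : ∀ x : (i : Fin n) → E i,
      (Set.univ.pi s).indicator (fun x => ∏ i, f i (x i)) x
        = ∏ i, (s i).indicator (f i) (x i) := by
    intro x
    by_cases hx : x ∈ Set.univ.pi s
    · rw [Set.indicator_of_mem hx]
      exact Finset.prod_congr rfl fun i _ =>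
        (Set.indicator_of_mem (hx i (Set.mem_univ i)) _).symm
    · rw [Set.indicator_of_notMem hx]
      rw [Set.mem_univ_pi] at hx
      push_neg at hx
      obtain ⟨i, hi⟩ := hx
      exact (Finset.prod_eq_zero (Finset.mem_univ i)
        (Set.indicator_of_notMem hi _)).symm
  rw [← lintegral_indicator (MeasurableSet.univ_pi hs)]
  simp_rw [key]
  rw [lintegral_fin_prod_eq_prod μ _ (fun i => (hf i).indicator (hs i))]
  exact Finset.prod_congr rfl fun i _ => by
    rw [lintegral_indicator (hs i), withDensity_apply _ (hs i)]

lemma quad_lower_bound {p : ℕ} (A : Matrix (Fin p) (Fin p) ℝ) (hA : A.IsHermitian)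
    (c : ℝ) (hc : ∀ i, c ≤ hA.eigenvalues i) (v : Fin p → ℝ) :
    c * (v ⬝ᵥ v) ≤ v ⬝ᵥ A.mulVec v := by
  classical
  set U : Matrix (Fin p) (Fin p) ℝ := (hA.eigenvectorUnitary : Matrix (Fin p) (Fin p) ℝ) with hU
  set D : Matrix (Fin p) (Fin p) ℝ := Matrix.diagonal hA.eigenvalues with hD
  have hsA : A = U * D * star U := by
    have := hA.spectral_theorem
    rwa [show Matrix.diagonal (RCLike.ofReal ∘ hA.eigenvalues) = D by
      rw [hD, RCLike.ofReal_real_eq_id]; rfl] at this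
  have hUnit : U * star U = 1 := (Matrix.mem_unitaryGroup_iff).mp hA.eigenvectorUnitary.2
  set w : Fin p → ℝ := v ᵥ* U with hw
  have e1 : v ⬝ᵥ A.mulVec v = (w ᵥ* D) ⬝ᵥ (Matrix.mulVec (star U) v) := by
    rw [hsA, ← Matrix.mulVec_mulVec, ← Matrix.mulVec_mulVec, Matrix.dotProduct_mulVec,
      Matrix.dotProduct_mulVec, ← hw]
  have e2 : v ⬝ᵥ v = w ⬝ᵥ (Matrix.mulVec (star U) v) := by
    rw [hw, ← Matrix.dotProduct_mulVec, Matrix.mulVec_mulVec, hUnit, Matrix.one_mulVec]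
  have hwv : Matrix.mulVec (star U) v = w := by
    ext i
    simp [Matrix.mulVec, Matrix.vecMul, dotProduct, hw, mul_comm, Matrix.star_apply]
  rw [e1, e2, hwv]
  simp only [dotProduct, Matrix.vecMul_diagonal, hD]
  rw [Finset.mul_sum]
  refine Finset.sum_le_sum fun i _ => ?_
  have := hc i
  nlinarith [sq_nonneg (w i), mul_self_nonneg (w i)]

lemma gaussDensity_pos {m : ℕ} {μ : Fin m → ℝ} {σ2 : ℝ} (hσ2 : 0 < σ2) (y : Fin m → ℝ) :
    0 < gaussDensity m μ σ2 y := by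
  unfold gaussDensity
  positivity

lemma measurable_gaussDensity {m : ℕ} {μ : Fin m → ℝ} {σ2 : ℝ} :
    Measurable (gaussDensity m μ σ2) := by
  unfold gaussDensity
  fun_prop

lemma gaussDensity_eq_prod {m : ℕ} {μ : Fin m → ℝ} {σ2 : ℝ} (hσ2 : 0 < σ2) (y : Fin m → ℝ) :
    gaussDensity m μ σ2 y
      = ∏ j, ((2 * Real.pi * σ2) ^ (-(1:ℝ) / 2) * Real.exp (-(y j - μ j) ^ 2 / (2 * σ2))) := by
  have hpos : (0:ℝ) < 2 * Real.pi * σ2 := by positivity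
  rw [Finset.prod_mul_distrib, Finset.prod_const, ← Real.exp_sum]
  unfold gaussDensity
  congr 1
  · rw [← Real.rpow_natCast ((2 * Real.pi * σ2) ^ (-(1:ℝ) / 2)) (Finset.univ.card),
      ← Real.rpow_mul hpos.le]
    congr 1
    rw [Finset.card_univ, Fintype.card_fin]
    ring
  · rw [← Finset.sum_div, ← Finset.sum_neg_distrib]

lemma lintegral_gauss1 {σ2 : ℝ} (hσ2 : 0 < σ2) (c : ℝ) :
    ∫⁻ x : ℝ, ENNReal.ofReal
      ((2 * Real.pi * σ2) ^ (-(1:ℝ) / 2) * Real.exp (-(x - c) ^ 2 / (2 * σ2))) = 1 := by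
  have h := ProbabilityTheory.lintegral_gaussianPDFReal_eq_one c
    (v := ⟨σ2, hσ2.le⟩) (fun h0 => hσ2.ne' (congrArg NNReal.toReal h0))
  rw [← h]
  congr 1 with x
  congr 1
  unfold ProbabilityTheory.gaussianPDFReal
  have hpos : (0:ℝ) < 2 * Real.pi * σ2 := by positivity
  show (2 * Real.pi * σ2) ^ (-(1:ℝ) / 2) * Real.exp (-(x - c) ^ 2 / (2 * σ2)) = (Real.sqrt (2 * Real.pi * σ2))⁻¹ * Real.exp (-(x - c) ^ 2 / (2 * σ2))
  congr 1
  rw [Real.sqrt_eq_rpow, ← Real.rpow_neg hpos.le]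
  norm_num

lemma lintegral_gaussDensity {m : ℕ} {σ2 : ℝ} (hσ2 : 0 < σ2) (μ : Fin m → ℝ) :
    ∫⁻ y : Fin m → ℝ, ENNReal.ofReal (gaussDensity m μ σ2 y) = 1 := by
  have hpos : (0:ℝ) < 2 * Real.pi * σ2 := by positivity
  calc ∫⁻ y : Fin m → ℝ, ENNReal.ofReal (gaussDensity m μ σ2 y)
      = ∫⁻ y : Fin m → ℝ, ∏ j, ENNReal.ofReal
          ((2 * Real.pi * σ2) ^ (-(1:ℝ) / 2) * Real.exp (-(y j - μ j) ^ 2 / (2 * σ2))) := by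
        congr 1 with y
        rw [gaussDensity_eq_prod hσ2, ENNReal.ofReal_prod_of_nonneg]
        intro j _
        positivity
    _ = ∏ j, ∫⁻ x : ℝ, ENNReal.ofReal
          ((2 * Real.pi * σ2) ^ (-(1:ℝ) / 2) * Real.exp (-(x - μ j) ^ 2 / (2 * σ2))) := by
        rw [MeasureTheory.volume_pi]
        exact lintegral_fin_prod_eq_prod (fun _ => (volume : Measure ℝ))
          (fun j x => ENNReal.ofReal
            ((2 * Real.pi * σ2) ^ (-(1:ℝ) / 2) * Real.exp (-(x - μ j) ^ 2 / (2 * σ2))))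
          (fun j => by fun_prop)
    _ = 1 := by
        rw [Finset.prod_congr rfl fun j _ => lintegral_gauss1 hσ2 (μ j)]
        simp

lemma gauss_sq_helper (K Sa Sb Sm D σ2 : ℝ) (hσ2 : σ2 ≠ 0) (hS : Sa + Sb = 2*Sm + D/2) :
    (K * Real.exp (-Sa/(2*σ2))) * (K * Real.exp (-Sb/(2*σ2)))
      = (Real.exp (-D/(8*σ2)) * (K * Real.exp (-Sm/(2*σ2))))^2 := by
  have hexp : -Sa/(2*σ2) + -Sb/(2*σ2)
      = (-D/(8*σ2) + -D/(8*σ2)) + (-Sm/(2*σ2) + -Sm/(2*σ2)) := by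
    field_simp
    linear_combination (-8) * hS
  calc (K * Real.exp (-Sa/(2*σ2))) * (K * Real.exp (-Sb/(2*σ2)))
      = K^2 * Real.exp (-Sa/(2*σ2) + -Sb/(2*σ2)) := by rw [pow_two, Real.exp_add]; ring
    _ = K^2 * Real.exp ((-D/(8*σ2) + -D/(8*σ2)) + (-Sm/(2*σ2) + -Sm/(2*σ2))) := by rw [hexp]
    _ = (Real.exp (-D/(8*σ2)) * (K * Real.exp (-Sm/(2*σ2))))^2 := by
        rw [Real.exp_add, Real.exp_add, Real.exp_add]; ring

lemma sqrt_gaussDensity_mul {m : ℕ} {σ2 : ℝ} (hσ2 : 0 < σ2) (a b y : Fin m → ℝ) :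
    Real.sqrt (gaussDensity m a σ2 y * gaussDensity m b σ2 y)
      = Real.exp (-(∑ j, (a j - b j) ^ 2) / (8 * σ2))
          * gaussDensity m (fun j => (a j + b j) / 2) σ2 y := by
  have hS : (∑ j, (y j - a j)^2) + (∑ j, (y j - b j)^2)
      = 2 * (∑ j, (y j - (a j + b j)/2)^2) + (∑ j, (a j - b j)^2)/2 := by
    rw [Finset.mul_sum, Finset.sum_div, ← Finset.sum_add_distrib, ← Finset.sum_add_distrib]
    exact Finset.sum_congr rfl fun j _ => by ring
  have hrhs : 0 ≤ Real.exp (-(∑ j, (a j - b j) ^ 2) / (8 * σ2))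
      * gaussDensity m (fun j => (a j + b j) / 2) σ2 y :=
    mul_nonneg (Real.exp_nonneg _) (gaussDensity_pos hσ2 y).le
  have hsq : gaussDensity m a σ2 y * gaussDensity m b σ2 y
      = (Real.exp (-(∑ j, (a j - b j) ^ 2) / (8 * σ2))
          * gaussDensity m (fun j => (a j + b j) / 2) σ2 y)^2 := by
    unfold gaussDensity
    exact gauss_sq_helper _ _ _ _ _ _ hσ2.ne' hS
  rw [hsq, Real.sqrt_sq hrhs]

lemma lintegral_sqrt_gauss_mul {m : ℕ} {σ2 : ℝ} (hσ2 : 0 < σ2) (a b : Fin m → ℝ) :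
    ∫⁻ y : Fin m → ℝ, ENNReal.ofReal
        (Real.sqrt (gaussDensity m a σ2 y * gaussDensity m b σ2 y))
      = ENNReal.ofReal (Real.exp (-(∑ j, (a j - b j) ^ 2) / (8 * σ2))) := by
  simp_rw [sqrt_gaussDensity_mul hσ2 a b, ENNReal.ofReal_mul (Real.exp_nonneg _)]
  rw [lintegral_const_mul _ measurable_gaussDensity.ennreal_ofReal,
    lintegral_gaussDensity hσ2, mul_one]

lemma test_bound {m n : ℕ} {σ2 : ℝ} (hσ2 : 0 < σ2) (μ ν : Fin n → Fin m → ℝ)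
    (A : Set (Fin n → Fin m → ℝ)) (hA : MeasurableSet A)
    (hle : ∀ y ∈ A, ∏ i, gaussDensity m (μ i) σ2 (y i) ≤ ∏ i, gaussDensity m (ν i) σ2 (y i)) :
    (Measure.pi fun i => volume.withDensity fun y => ENNReal.ofReal (gaussDensity m (μ i) σ2 y)) A
      ≤ ENNReal.ofReal (Real.exp (-(∑ i, ∑ j, (μ i j - ν i j) ^ 2) / (8 * σ2))) := by
  rw [pi_withDensity_eq (fun _ => (volume : Measure (Fin m → ℝ)))
      (fun i y => ENNReal.ofReal (gaussDensity m (μ i) σ2 y))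
      (fun i => measurable_gaussDensity.ennreal_ofReal),
    withDensity_apply _ hA]
  have hmeas : Measurable fun y : Fin n → Fin m → ℝ => ∏ i, ENNReal.ofReal
      (Real.sqrt (gaussDensity m (μ i) σ2 (y i) * gaussDensity m (ν i) σ2 (y i))) := by
    refine Finset.measurable_prod _ fun i _ => ?_
    have h1 : Measurable fun x : Fin m → ℝ =>
        Real.sqrt (gaussDensity m (μ i) σ2 x * gaussDensity m (ν i) σ2 x) :=
      (measurable_gaussDensity.mul measurable_gaussDensity).sqrt
    exact (h1.comp (measurable_pi_apply i)).ennreal_ofReal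
  calc ∫⁻ y in A, ∏ i, ENNReal.ofReal (gaussDensity m (μ i) σ2 (y i))
        ∂(Measure.pi fun _ => (volume : Measure (Fin m → ℝ)))
      ≤ ∫⁻ y in A, ∏ i, ENNReal.ofReal
          (Real.sqrt (gaussDensity m (μ i) σ2 (y i) * gaussDensity m (ν i) σ2 (y i)))
        ∂(Measure.pi fun _ => (volume : Measure (Fin m → ℝ))) := by
        refine MeasureTheory.setLIntegral_mono hmeas fun y hy => ?_
        rw [← ENNReal.ofReal_prod_of_nonneg (fun i _ => (gaussDensity_pos hσ2 _).le),
          ← ENNReal.ofReal_prod_of_nonneg (fun i _ => Real.sqrt_nonneg _)]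
        refine ENNReal.ofReal_le_ofReal ?_
        have hP0 : (0:ℝ) ≤ ∏ i, gaussDensity m (μ i) σ2 (y i) :=
          Finset.prod_nonneg fun i _ => (gaussDensity_pos hσ2 _).le
        have hprod : ∏ i, Real.sqrt (gaussDensity m (μ i) σ2 (y i) * gaussDensity m (ν i) σ2 (y i))
            = Real.sqrt (∏ i, gaussDensity m (μ i) σ2 (y i) * gaussDensity m (ν i) σ2 (y i)) := by
          simp_rw [Real.sqrt_eq_rpow]
          exact Real.finset_prod_rpow _ _
            (fun i _ => mul_nonneg (gaussDensity_pos hσ2 _).le (gaussDensity_pos hσ2 _).le) _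
        rw [hprod, Finset.prod_mul_distrib]
        calc ∏ i, gaussDensity m (μ i) σ2 (y i)
            = Real.sqrt ((∏ i, gaussDensity m (μ i) σ2 (y i))
                * ∏ i, gaussDensity m (μ i) σ2 (y i)) := (Real.sqrt_mul_self hP0).symm
          _ ≤ Real.sqrt ((∏ i, gaussDensity m (μ i) σ2 (y i))
                * ∏ i, gaussDensity m (ν i) σ2 (y i)) :=
              Real.sqrt_le_sqrt (mul_le_mul_of_nonneg_left (hle y hy) hP0)
    _ ≤ ∫⁻ y, ∏ i, ENNReal.ofReal
          (Real.sqrt (gaussDensity m (μ i) σ2 (y i) * gaussDensity m (ν i) σ2 (y i)))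
        ∂(Measure.pi fun _ => (volume : Measure (Fin m → ℝ))) :=
        MeasureTheory.setLIntegral_le_lintegral _ _
    _ = ∏ i, ∫⁻ x : Fin m → ℝ, ENNReal.ofReal
          (Real.sqrt (gaussDensity m (μ i) σ2 x * gaussDensity m (ν i) σ2 x)) :=
        lintegral_fin_prod_eq_prod (fun _ => (volume : Measure (Fin m → ℝ)))
          (fun i x => ENNReal.ofReal
            (Real.sqrt (gaussDensity m (μ i) σ2 x * gaussDensity m (ν i) σ2 x)))
          (fun i => ((measurable_gaussDensity.mul measurable_gaussDensity).sqrt).ennreal_ofReal)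
    _ = ∏ i, ENNReal.ofReal (Real.exp (-(∑ j, (μ i j - ν i j) ^ 2) / (8 * σ2))) :=
        Finset.prod_congr rfl fun i _ => lintegral_sqrt_gauss_mul hσ2 _ _
    _ = ENNReal.ofReal (Real.exp (-(∑ i, ∑ j, (μ i j - ν i j) ^ 2) / (8 * σ2))) := by
        rw [← ENNReal.ofReal_prod_of_nonneg (fun i _ => Real.exp_nonneg _), ← Real.exp_sum]
        congr 2
        rw [← Finset.sum_div, ← Finset.sum_neg_distrib]

/-- Existence of exponentially consistent tests for two `M`-bounded spatially varying
coefficient configurations which are `ε`-separated in the `‖·‖_{1,∞}` norm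
(the maximum over coordinates `k` of the empirical `L¹` distance
`(1/n) Σᵢ |β¹_k(sᵢ) - β⁰_k(sᵢ)|`), provided `m > 32(log 2)σ²p/(ε²d_min)`:
there are `C > 0` and `N ≥ 1`, depending only on `ε, m, p, σ², d_min, M`, such that for
every `n ≥ N` there is a measurable `{0,1}`-valued test `Φ` with type-I error under
`P₀` and type-II error under `P₁` both at most `exp(-C n)`. -/
theorem exists_exponential_test (m p : ℕ) (hp : 0 < p) (hmp : p ≤ m)
    (X : Matrix (Fin m) (Fin p) ℝ) (hX : IsUnit (Xᵀ * X).det)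
    (dmin σ2 ε M : ℝ) (hσ2 : 0 < σ2) (hε : 0 < ε) (hM0 : 0 < M)
    (hH : (((m : ℝ)⁻¹) • (Xᵀ * X)).IsHermitian)
    (hdmin : IsLeast (Set.range hH.eigenvalues) dmin) (hdpos : 0 < dmin)
    (hm : 32 * Real.log 2 * σ2 * p / (ε ^ 2 * dmin) < (m : ℝ)) :
    ∃ C : ℝ, 0 < C ∧ ∃ N : ℕ, 1 ≤ N ∧
      ∀ n : ℕ, N ≤ n → ∀ β0 β1 : Fin n → Fin p → ℝ,
        (∀ i k, |β0 i k| ≤ M) → (∀ i k, |β1 i k| ≤ M) →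
        (∃ k, ε ≤ (1 / (n : ℝ)) * ∑ i, |β1 i k - β0 i k|) →
        ∃ Φ : (Fin n → Fin m → ℝ) → ℝ, Measurable Φ ∧ (∀ y, Φ y = 0 ∨ Φ y = 1) ∧
          (∫ y, Φ y ∂(Measure.pi fun i => gaussMeasure m (X.mulVec (β0 i)) σ2))
            ≤ Real.exp (-C * n) ∧
          (∫ y, (1 - Φ y) ∂(Measure.pi fun i => gaussMeasure m (X.mulVec (β1 i)) σ2))
            ≤ Real.exp (-C * n) := by
  classical
  have hm0 : 0 < m := lt_of_lt_of_le hp hmp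
  have hmR : (0:ℝ) < m := by exact_mod_cast hm0
  have hC : 0 < ε ^ 2 * dmin * m / (8 * σ2) := by positivity
  refine ⟨ε ^ 2 * dmin * m / (8 * σ2), hC, 1, le_rfl, ?_⟩
  intro n hn β0 β1 hb0 hb1 hsep
  obtain ⟨k, hk⟩ := hsep
  have hn0 : 0 < n := hn
  have hnR : (0:ℝ) < n := by exact_mod_cast hn0
  -- quadratic form lower bound
  have hquad : ∀ v : Fin p → ℝ,
      (m:ℝ) * dmin * (∑ k', v k' ^ 2) ≤ ∑ j, (X.mulVec v) j ^ 2 := by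
    intro v
    have h1 := quad_lower_bound _ hH dmin (fun i => hdmin.2 ⟨i, rfl⟩) v
    have h2 : v ⬝ᵥ (((m:ℝ)⁻¹) • (Xᵀ * X)).mulVec v
        = (m:ℝ)⁻¹ * ((X.mulVec v) ⬝ᵥ (X.mulVec v)) := by
      rw [Matrix.smul_mulVec, dotProduct_smul, smul_eq_mul]
      congr 1
      rw [← Matrix.mulVec_mulVec, Matrix.dotProduct_mulVec, Matrix.vecMul_transpose]
    rw [h2] at h1
    have hdot1 : v ⬝ᵥ v = ∑ k', v k' ^ 2 := by
      simp [dotProduct, sq]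
    have hdot2 : (X.mulVec v) ⬝ᵥ (X.mulVec v) = ∑ j, (X.mulVec v) j ^ 2 := by
      simp [dotProduct, sq]
    rw [hdot1, hdot2] at h1
    calc (m:ℝ) * dmin * (∑ k', v k' ^ 2) = (m:ℝ) * (dmin * ∑ k', v k' ^ 2) := by ring
      _ ≤ (m:ℝ) * ((m:ℝ)⁻¹ * ∑ j, (X.mulVec v) j ^ 2) :=
          mul_le_mul_of_nonneg_left h1 hmR.le
      _ = ∑ j, (X.mulVec v) j ^ 2 := by field_simp
  -- separation implies a lower bound on the total squared mean distance
  have hsum : (ε ^ 2 * dmin * m) * n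
      ≤ ∑ i, ∑ j, ((X.mulVec (β0 i)) j - (X.mulVec (β1 i)) j) ^ 2 := by
    have hT : (n:ℝ) * ε ≤ ∑ i, |β1 i k - β0 i k| := by
      have h := mul_le_mul_of_nonneg_left hk hnR.le
      calc (n:ℝ) * ε ≤ (n:ℝ) * (1 / (n:ℝ) * ∑ i, |β1 i k - β0 i k|) := h
        _ = ∑ i, |β1 i k - β0 i k| := by field_simp
    have hcheb : (∑ i, |β1 i k - β0 i k|) ^ 2 ≤ (n:ℝ) * ∑ i, (β1 i k - β0 i k) ^ 2 := by
      have h := sq_sum_le_card_mul_sum_sq (s := (Finset.univ : Finset (Fin n)))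
        (f := fun i => |β1 i k - β0 i k|)
      simpa [sq_abs, Finset.card_univ] using h
    have hkey : (n:ℝ) * ε ^ 2 ≤ ∑ i, (β1 i k - β0 i k) ^ 2 := by
      have h1 : ((n:ℝ) * ε) ^ 2 ≤ (∑ i, |β1 i k - β0 i k|) ^ 2 := by
        have hne : (0:ℝ) ≤ (n:ℝ) * ε := by positivity
        exact pow_le_pow_left₀ hne hT 2
      nlinarith [h1, hcheb, hnR]
    calc (ε ^ 2 * dmin * m) * n = (m:ℝ) * dmin * ((n:ℝ) * ε ^ 2) := by ring
      _ ≤ (m:ℝ) * dmin * ∑ i, (β1 i k - β0 i k) ^ 2 := by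
          refine mul_le_mul_of_nonneg_left hkey ?_
          positivity
      _ = ∑ i, (m:ℝ) * dmin * (β1 i k - β0 i k) ^ 2 := by rw [Finset.mul_sum]
      _ ≤ ∑ i, ∑ j, ((X.mulVec (β0 i)) j - (X.mulVec (β1 i)) j) ^ 2 := by
          refine Finset.sum_le_sum fun i _ => ?_
          have h2 : (m:ℝ) * dmin * (β1 i k - β0 i k) ^ 2
              ≤ (m:ℝ) * dmin * ∑ k', (β0 i k' - β1 i k') ^ 2 := by
            refine mul_le_mul_of_nonneg_left ?_ (by positivity)
            have he : (β1 i k - β0 i k) ^ 2 = (β0 i k - β1 i k) ^ 2 := by ring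
            rw [he]
            exact Finset.single_le_sum (f := fun k' => (β0 i k' - β1 i k') ^ 2)
              (fun k' _ => sq_nonneg _) (Finset.mem_univ k)
          refine h2.trans ((hquad (β0 i - β1 i)).trans_eq ?_)
          refine Finset.sum_congr rfl fun j _ => ?_
          rw [Matrix.mulVec_sub]
          simp
  -- the likelihood-ratio test
  set A : Set (Fin n → Fin m → ℝ) :=
    {y | ∏ i, gaussDensity m (X.mulVec (β0 i)) σ2 (y i)
      ≤ ∏ i, gaussDensity m (X.mulVec (β1 i)) σ2 (y i)} with hAdef
  have hAmeas : MeasurableSet A := by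
    refine measurableSet_le ?_ ?_ <;>
      exact Finset.measurable_prod _ fun i _ =>
        measurable_gaussDensity.comp (measurable_pi_apply i)
  have hsum' : (ε ^ 2 * dmin * m) * n
      ≤ ∑ i, ∑ j, ((X.mulVec (β1 i)) j - (X.mulVec (β0 i)) j) ^ 2 :=
    hsum.trans_eq (Finset.sum_congr rfl fun i _ => Finset.sum_congr rfl fun j _ => by ring)
  have hexp_bound : ∀ S : ℝ, (ε ^ 2 * dmin * m) * n ≤ S →
      ENNReal.ofReal (Real.exp (-S / (8 * σ2)))
      ≤ ENNReal.ofReal (Real.exp (-(ε ^ 2 * dmin * m / (8 * σ2)) * n)) := by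
    intro S hS
    refine ENNReal.ofReal_le_ofReal (Real.exp_le_exp.mpr ?_)
    rw [neg_div, neg_mul, neg_le_neg_iff]
    have he : ε ^ 2 * dmin * m / (8 * σ2) * n = (ε ^ 2 * dmin * m * n) / (8 * σ2) := by
      ring
    rw [he]
    exact (div_le_div_iff_of_pos_right (by positivity)).mpr hS
  refine ⟨A.indicator 1, (measurable_one).indicator hAmeas, fun y => ?_, ?_, ?_⟩
  · by_cases h : y ∈ A <;> simp [h]
  · -- type I error
    rw [integral_indicator_one hAmeas]
    refine ENNReal.toReal_le_of_le_ofReal (Real.exp_nonneg _) ?_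
    have hb := test_bound hσ2 (fun i => X.mulVec (β0 i)) (fun i => X.mulVec (β1 i))
      A hAmeas (fun y hy => hy)
    simp only [gaussMeasure]
    exact le_trans hb (hexp_bound _ hsum)
  · -- type II error
    have hpt : (fun y : Fin n → Fin m → ℝ => 1 - A.indicator 1 y)
        = Aᶜ.indicator (1 : (Fin n → Fin m → ℝ) → ℝ) := by
      funext y
      by_cases h : y ∈ A <;> simp [h]
    simp only [hpt]
    rw [integral_indicator_one hAmeas.compl]
    refine ENNReal.toReal_le_of_le_ofReal (Real.exp_nonneg _) ?_
    have hb := test_bound hσ2 (fun i => X.mulVec (β1 i)) (fun i => X.mulVec (β0 i))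
      Aᶜ hAmeas.compl (fun y hy => le_of_not_ge hy)
    simp only [gaussMeasure]
    exact le_trans hb (hexp_bound _ hsum')
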